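/- Let g be a finite-dimensional (G,ε)-color Lie algebra, (g[[t]],μ_t = Σ t^n μ_n) a graded deformation of g, and (U(g)[[t]], π_t = Σ t^n π_n) the induced graded associative deformation of U(g) obtained via the PBW isomorphism Φ with U(g[[t]]). Then π₁ is a graded Hochschild 2-cocycle of U(g) (with coefficients in U(g) itself), and its restriction to g satisfies μ₁(X,Y) = π₁(X,Y) − ε(|X|,|Y|) π₁(Y,X) for all homogeneous X, Y ∈ g. -/

import Mathlib

open scoped DirectSum TensorProduct

/-! Common definitions: color Lie algebras over an abelian group `G` with an
antisymmetric bicharacter `ε`, their universal enveloping algebras, the canonical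
filtration and associated graded objects, and formal graded deformations. -/

/-- An antisymmetric bicharacter `ε : G × G → Rˣ` (values taken in `R`). -/
def IsBicharacter {R : Type*} [CommRing R] {G : Type*} [CommGroup G]
    (ε : G → G → R) : Prop :=
  (∀ g h, ε g h * ε h g = 1) ∧
  (∀ g h k, ε g (h * k) = ε g h * ε g k) ∧
  (∀ g h k, ε (g * h) k = ε g k * ε h k)

/-- A `(G,ε)`-color Lie algebra structure on an `R`-module `L`:
a `G`-grading (with `L` the internal direct sum of the homogeneous components),
together with a bilinear bracket which respects the grading, is `ε`-antisymmetric
and satisfies the `ε`-Jacobi identity on homogeneous elements. -/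
structure ColorLie (R : Type*) [CommRing R] (G : Type*) [CommGroup G] [DecidableEq G]
    (ε : G → G → R) (L : Type*) [AddCommGroup L] [Module R L] : Type _ where
  grading : G → Submodule R L
  internal : DirectSum.IsInternal grading
  bracket : L →ₗ[R] L →ₗ[R] L
  bracket_grade : ∀ {g h : G} {a b : L}, a ∈ grading g → b ∈ grading h →
    bracket a b ∈ grading (g * h)
  bracket_antisymm : ∀ {g h : G} {a b : L}, a ∈ grading g → b ∈ grading h →
    bracket a b = -(ε g h) • bracket b a
  bracket_jacobi : ∀ {g h k : G} {a b c : L}, a ∈ grading g → b ∈ grading h →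
    c ∈ grading k →
    ε k g • bracket a (bracket b c) + ε g h • bracket b (bracket c a) +
      ε h k • bracket c (bracket a b) = 0

namespace ColorLie

variable {R : Type*} [CommRing R] {G : Type*} [CommGroup G] [DecidableEq G]
  {ε : G → G → R} {L : Type*} [AddCommGroup L] [Module R L]

/-- The relation on the tensor algebra whose induced quotient is the universal
enveloping algebra: `a ⊗ b - ε(|a|,|b|) b ⊗ a ~ [a,b]` for homogeneous `a, b`. -/
inductive Rel (cl : ColorLie R G ε L) :
    TensorAlgebra R L → TensorAlgebra R L → Prop
  | mk {g h : G} {a b : L} (ha : a ∈ cl.grading g) (hb : b ∈ cl.grading h) :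
      Rel cl (TensorAlgebra.ι R a * TensorAlgebra.ι R b
          - ε g h • (TensorAlgebra.ι R b * TensorAlgebra.ι R a))
        (TensorAlgebra.ι R (cl.bracket a b))

/-- The universal enveloping algebra `U(L) = T(L)/J(L)` of a color Lie algebra. -/
abbrev U (cl : ColorLie R G ε L) : Type _ := RingQuot cl.Rel

/-- The canonical map `i : L → U(L)`. -/
noncomputable def ιU (cl : ColorLie R G ε L) : L →ₗ[R] cl.U :=
  (RingQuot.mkAlgHom R cl.Rel).toLinearMap ∘ₗ TensorAlgebra.ι R

/-- The relation on the tensor algebra defining the color symmetric algebra: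
`a ⊗ b ~ ε(|a|,|b|) b ⊗ a` for homogeneous `a, b`. -/
inductive SymRel (cl : ColorLie R G ε L) :
    TensorAlgebra R L → TensorAlgebra R L → Prop
  | mk {g h : G} {a b : L} (ha : a ∈ cl.grading g) (hb : b ∈ cl.grading h) :
      SymRel cl (TensorAlgebra.ι R a * TensorAlgebra.ι R b)
        (ε g h • (TensorAlgebra.ι R b * TensorAlgebra.ι R a))

/-- The color symmetric algebra `S(L) = T(L)/I(L)`. -/
abbrev SymAlg (cl : ColorLie R G ε L) : Type _ := RingQuot cl.SymRel

/-- The canonical map `L → S(L)`. -/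
noncomputable def ιS (cl : ColorLie R G ε L) : L →ₗ[R] cl.SymAlg :=
  (RingQuot.mkAlgHom R cl.SymRel).toLinearMap ∘ₗ TensorAlgebra.ι R

/-- The degree-`g` component of the `G`-grading of `U(L)`: the span of the
monomials `i(a₁) ⋯ i(aₖ)` with `aⱼ` homogeneous and the product of the degrees
equal to `g`. -/
noncomputable def Udeg (cl : ColorLie R G ε L) (g : G) : Submodule R cl.U :=
  Submodule.span R { x : cl.U | ∃ l : List (G × L),
    (∀ p ∈ l, p.2 ∈ cl.grading p.1) ∧ (l.map Prod.fst).prod = g ∧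
    x = (l.map fun p => cl.ιU p.2).prod }

/-- The `n`-th piece `U^n(L)` of the canonical filtration of `U(L)`: the span of
products of at most `n` elements of (the image of) `L`. -/
noncomputable def Ufilt (cl : ColorLie R G ε L) (n : ℕ) : Submodule R cl.U :=
  Submodule.span R { x : cl.U | ∃ l : List L, l.length ≤ n ∧
    x = (l.map fun a => cl.ιU a).prod }

/-- `U^{n-1}(L)`, with the convention `U^{-1}(L) = 0`. -/
noncomputable def UfiltPred (cl : ColorLie R G ε L) : ℕ → Submodule R cl.U
  | 0 => ⊥
  | n + 1 => cl.Ufilt n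

/-- `U^{n-1}(L)` viewed as a submodule of `U^n(L)`. -/
noncomputable def grSub (cl : ColorLie R G ε L) (n : ℕ) : Submodule R (cl.Ufilt n) :=
  Submodule.comap (cl.Ufilt n).subtype (cl.UfiltPred n)

/-- The `n`-th piece `gr^n(U(L)) = U^n(L)/U^{n-1}(L)` of the associated graded algebra. -/
noncomputable instance instAddCommGroupUfilt (cl : ColorLie R G ε L) (n : ℕ) : AddCommGroup (cl.Ufilt n) :=
  Submodule.addCommGroup (M := cl.U) (cl.Ufilt n)

abbrev grU (cl : ColorLie R G ε L) (n : ℕ) : Type _ := cl.Ufilt n ⧸ cl.grSub n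

/-- The canonical projection `π_n : U^n(L) → gr^n(U(L))`. -/
noncomputable def πgr (cl : ColorLie R G ε L) (n : ℕ) : cl.Ufilt n →ₗ[R] cl.grU n :=
  (cl.grSub n).mkQ

/-- The degree-`g` component (for `g ∈ G`) of `gr^n(U(L))`. -/
noncomputable def grUdeg (cl : ColorLie R G ε L) (n : ℕ) (g : G) :
    Submodule R (cl.grU n) :=
  Submodule.map (cl.grSub n).mkQ
    (Submodule.comap (cl.Ufilt n).subtype (cl.Udeg g))

/-- The `(ℕ,G)`-bigraded piece of the color symmetric algebra: span of products of
exactly `n` generators (for the ℕ-grading). -/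
noncomputable def SdegZ (cl : ColorLie R G ε L) (n : ℕ) : Submodule R cl.SymAlg :=
  Submodule.span R { x : cl.SymAlg | ∃ l : List L, l.length = n ∧
    x = (l.map fun a => cl.ιS a).prod }

/-- The degree-`g` component of the `G`-grading of `S(L)`. -/
noncomputable def SdegG (cl : ColorLie R G ε L) (g : G) : Submodule R cl.SymAlg :=
  Submodule.span R { x : cl.SymAlg | ∃ l : List (G × L),
    (∀ p ∈ l, p.2 ∈ cl.grading p.1) ∧ (l.map Prod.fst).prod = g ∧
    x = (l.map fun p => cl.ιS p.2).prod }

/-- A graded deformation `μ_t = Σ tⁿ μ_n` of a color Lie algebra `(L, μ₀)`: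
every coefficient `μ_n` is a bilinear map of degree `e`, the family is
`ε`-antisymmetric and satisfies the `ε`-Jacobi identity order by order in `t`,
and `μ 0` is the original bracket. -/
structure Deformation (cl : ColorLie R G ε L) : Type _ where
  μ : ℕ → L →ₗ[R] L →ₗ[R] L
  init : μ 0 = cl.bracket
  graded : ∀ (n : ℕ) {g h : G} {a b : L}, a ∈ cl.grading g → b ∈ cl.grading h →
    μ n a b ∈ cl.grading (g * h)
  antisymm : ∀ (n : ℕ) {g h : G} {a b : L}, a ∈ cl.grading g → b ∈ cl.grading h →
    μ n a b = -(ε g h) • μ n b a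
  jacobi : ∀ (r : ℕ) {g h k : G} {a b c : L}, a ∈ cl.grading g →
    b ∈ cl.grading h → c ∈ cl.grading k →
    ∑ s ∈ Finset.range (r + 1),
      (ε k g • μ s a (μ (r - s) b c) + ε g h • μ s b (μ (r - s) c a) +
        ε h k • μ s c (μ (r - s) a b)) = 0

/-- A graded deformation is trivial iff it is equivalent to the undeformed bracket
via a graded formal automorphism `f = id + t f₁ + t² f₂ + ⋯` with each `f_n` of
degree `e`. -/
def Deformation.IsTrivial {cl : ColorLie R G ε L} (D : cl.Deformation) : Prop :=
  ∃ f : ℕ → L →ₗ[R] L, f 0 = LinearMap.id ∧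
    (∀ (n : ℕ) {g : G} {a : L}, a ∈ cl.grading g → f n a ∈ cl.grading g) ∧
    ∀ (r : ℕ) (a b : L),
      ∑ s ∈ Finset.range (r + 1), f s (D.μ (r - s) a b) =
      ∑ q ∈ Finset.range (r + 1), cl.bracket (f q a) (f (r - q) b)

/-- `ψ` is a graded Chevalley–Eilenberg 2-cocycle of degree `e` of `L` with values
in the adjoint module `L`. -/
def IsCocycle2Adj (cl : ColorLie R G ε L) (ψ : L →ₗ[R] L →ₗ[R] L) : Prop :=
  (∀ {g h : G} {a b : L}, a ∈ cl.grading g → b ∈ cl.grading h →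
    ψ a b ∈ cl.grading (g * h)) ∧
  (∀ {g h : G} {a b : L}, a ∈ cl.grading g → b ∈ cl.grading h →
    ψ a b = -(ε g h) • ψ b a) ∧
  (∀ {g h k : G} {x y z : L}, x ∈ cl.grading g → y ∈ cl.grading h →
    z ∈ cl.grading k →
    cl.bracket x (ψ y z) - ε g h • cl.bracket y (ψ x z)
      + (ε g k * ε h k) • cl.bracket z (ψ x y)
      - ε g h • ψ (cl.bracket x y) z + (ε g k * ε h k) • ψ (cl.bracket x z) y
      - (ε g h * ε g k * ε h k) • ψ (cl.bracket y z) x = 0)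

/-- `ψ` is a graded Chevalley–Eilenberg 2-coboundary of degree `e` with values in
the adjoint module: `ψ = δ_CE f` for some degree-`e` 1-cochain `f`. -/
def IsCoboundary2Adj (cl : ColorLie R G ε L) (ψ : L →ₗ[R] L →ₗ[R] L) : Prop :=
  ∃ f : L →ₗ[R] L, (∀ {g : G} {a : L}, a ∈ cl.grading g → f a ∈ cl.grading g) ∧
    ∀ {g h : G} {x y : L}, x ∈ cl.grading g → y ∈ cl.grading h →
      ψ x y = cl.bracket x (f y) - ε g h • cl.bracket y (f x) - f (cl.bracket x y)

/-- `ω` is a graded Chevalley–Eilenberg 2-cocycle of degree `e` of `L` with values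
in the trivial module `R` (concentrated in degree `e`). -/
def IsCocycleTriv (cl : ColorLie R G ε L) (ω : L →ₗ[R] L →ₗ[R] R) : Prop :=
  (∀ {g h : G} {a b : L}, a ∈ cl.grading g → b ∈ cl.grading h → g * h ≠ 1 →
    ω a b = 0) ∧
  (∀ {g h : G} {a b : L}, a ∈ cl.grading g → b ∈ cl.grading h →
    ω a b = -(ε g h) * ω b a) ∧
  (∀ {g h k : G} {x y z : L}, x ∈ cl.grading g → y ∈ cl.grading h →
    z ∈ cl.grading k →
    -(ε g h) * ω (cl.bracket x y) z + (ε g k * ε h k) * ω (cl.bracket x z) y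
      - (ε g h * ε g k * ε h k) * ω (cl.bracket y z) x = 0)

/-- `ω` is a graded 2-coboundary of degree `e` with values in the trivial module `R`. -/
def IsCoboundaryTriv (cl : ColorLie R G ε L) (ω : L →ₗ[R] L →ₗ[R] R) : Prop :=
  ∃ f : L →ₗ[R] R, (∀ {g : G} {a : L}, a ∈ cl.grading g → g ≠ 1 → f a = 0) ∧
    ∀ {g h : G} {x y : L}, x ∈ cl.grading g → y ∈ cl.grading h →
      ω x y = -(f (cl.bracket x y))

end ColorLie

/-- A graded associative (formal) deformation `π_t = Σ tⁿ π_n` of a `G`-graded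
associative algebra `A` (with grading `𝒜`): `π₀` is the original multiplication,
every coefficient `π_n` is of degree `e`, and `π_t` is associative order by
order in `t`. -/
structure AssocDeformation (R : Type*) (G : Type*) [CommRing R] [CommGroup G]
    (A : Type*) [Ring A] [Algebra R A] (𝒜 : G → Submodule R A) : Type _ where
  π : ℕ → A →ₗ[R] A →ₗ[R] A
  init : ∀ a b : A, π 0 a b = a * b
  graded : ∀ (n : ℕ) {g h : G} {a b : A}, a ∈ 𝒜 g → b ∈ 𝒜 h → π n a b ∈ 𝒜 (g * h)
  assoc : ∀ (r : ℕ) (a b c : A),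
    ∑ s ∈ Finset.range (r + 1), π s (π (r - s) a b) c =
    ∑ s ∈ Finset.range (r + 1), π s a (π (r - s) b c)

/-- A graded associative deformation is trivial iff it is conjugate to the
undeformed multiplication by a graded formal isomorphism
`φ_t = id + t φ₁ + t² φ₂ + ⋯` with each `φ_r` of degree `e`. -/
def AssocDeformation.IsTrivial {R G A : Type*} [CommRing R] [CommGroup G]
    [Ring A] [Algebra R A] {𝒜 : G → Submodule R A}
    (D : AssocDeformation R G A 𝒜) : Prop :=
  ∃ f : ℕ → A →ₗ[R] A, f 0 = LinearMap.id ∧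
    (∀ (n : ℕ) {g : G} {a : A}, a ∈ 𝒜 g → f n a ∈ 𝒜 g) ∧
    ∀ (r : ℕ) (a b : A),
      ∑ s ∈ Finset.range (r + 1), f s (D.π (r - s) a b) =
      ∑ q ∈ Finset.range (r + 1), f q a * f (r - q) b
/-- The space of linear maps `M → M` homogeneous of degree `α` with respect to a
`G`-grading `ℳ` of `M`. -/
def HomDeg {R : Type*} [CommRing R] {G : Type*} [CommGroup G]
    {M : Type*} [AddCommGroup M] [Module R M]
    (ℳ : G → Submodule R M) (α : G) : Submodule R (M →ₗ[R] M) where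
  carrier := { f | ∀ (β : G), ∀ x ∈ ℳ β, f x ∈ ℳ (α * β) }
  add_mem' := by
    intro f g hf hg β x hx
    simpa using add_mem (hf β x hx) (hg β x hx)
  zero_mem' := by
    intro β x hx
    simp
  smul_mem' := by
    intro c f hf β x hx
    simpa using Submodule.smul_mem _ c (hf β x hx)

/-- The graded Chevalley–Eilenberg coboundary operator, on cochains recorded
together with the degrees of their (homogeneous) arguments.  For a cochain `f`
of degree `γ`, arguments `x` with degrees `α`,
`δf(x₁,…,x_{n+2}) = Σᵢ (-1)^{i+1} ε(γ,αᵢ) εᵢ xᵢ · f(…,x̂ᵢ,…)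
  + Σ_{i<j} (-1)^{i+j} ε(γ,αᵢ) ε(γ,αⱼ) εᵢ εⱼ f([xᵢ,xⱼ],…,x̂ᵢ,…,x̂ⱼ,…)`
with `εᵢ = Π_{h<i} ε(α_h,αᵢ)` (indices are 1-based in the informal formula). -/
def ceD {R : Type*} [CommRing R] {G : Type*} [CommGroup G]
    {L : Type*} [AddCommGroup L] [Module R L]
    {N : Type*} [AddCommGroup N] [Module R N]
    (ε : G → G → R) (bracket : L →ₗ[R] L →ₗ[R] L) (ρ : L →ₗ[R] N →ₗ[R] N)
    (γ : G) {n : ℕ}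
    (f : (Fin (n + 1) → G) → (Fin (n + 1) → L) → N)
    (α : Fin (n + 2) → G) (x : Fin (n + 2) → L) : N :=
  (∑ i : Fin (n + 2),
    ((-1 : ℤ) ^ (i : ℕ)) •
      ((ε γ (α i) * ∏ h ∈ Finset.univ.filter (fun h : Fin (n + 2) => h < i),
          ε (α h) (α i)) •
        ρ (x i) (f (Fin.removeNth i α) (Fin.removeNth i x))))
  + ∑ i : Fin (n + 2), ∑ j : Fin (n + 2),
      if hij : i < j then
        ((-1 : ℤ) ^ ((i : ℕ) + (j : ℕ))) •
          ((ε γ (α i) * ε γ (α j) *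
            (∏ h ∈ Finset.univ.filter (fun h : Fin (n + 2) => h < i), ε (α h) (α i)) *
            (∏ h ∈ Finset.univ.filter (fun h : Fin (n + 2) => h < j), ε (α h) (α j))) •
            f (Fin.cons (α i * α j)
                (Fin.removeNth ⟨i.1, by
                  have h1 := j.isLt
                  have h2 : (i : ℕ) < (j : ℕ) := hij
                  omega⟩ (Fin.removeNth j α)))
              (Fin.cons (bracket (x i) (x j))
                (Fin.removeNth ⟨i.1, by
                  have h1 := j.isLt
                  have h2 : (i : ℕ) < (j : ℕ) := hij
                  omega⟩ (Fin.removeNth j x))))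
      else 0

namespace ColorLie

variable {R : Type*} [CommRing R] {G : Type*} [CommGroup G] [DecidableEq G]
  {ε : G → G → R} {L : Type*} [AddCommGroup L] [Module R L]

/-- The `n`-th coefficient of the star product induced on the associated graded
algebra by a symmetrization isomorphism `ω`:
for `u ∈ gr^p(U(L))`, `v ∈ gr^q(U(L))`,
`m_n(u,v) = ω⁻¹((ω(u) ∘ ω(v))_{p+q-n}) ∈ gr^{p+q-n}(U(L))`. -/
noncomputable def starCoef (cl : ColorLie R G ε L)
    (ω : (⨁ n : ℕ, cl.grU n) ≃ₗ[R] cl.U) (n p q : ℕ)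
    (u : cl.grU p) (v : cl.grU q) : cl.grU (p + q - n) :=
  DirectSum.component R ℕ (fun m => cl.grU m) (p + q - n)
    (ω.symm (ω (DirectSum.lof R ℕ (fun m => cl.grU m) p u) *
      ω (DirectSum.lof R ℕ (fun m => cl.grU m) q v)))

end ColorLie

/-- Extraction of the `n`-th power series coefficient of an element of
`R[[t]] ⊗ M`, i.e. of "`M[[t]]`" for `M` finite dimensional. -/
noncomputable def coeffPS (K : Type*) [CommRing K] (M : Type*) [AddCommGroup M]
    [Module K M] (n : ℕ) : (PowerSeries K ⊗[K] M) →ₗ[K] M :=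
  (TensorProduct.lid K M).toLinearMap ∘ₗ LinearMap.rTensor M (PowerSeries.coeff n)

/-- The relation whose `RingQuot` is the quotient of `A` by the two-sided ideal
generated by `1 - c`. -/
def unitRel {A : Type*} [Ring A] (c : A) : A → A → Prop := fun x y => x = 1 ∧ y = c

/-- The Poincaré–Birkhoff–Witt admissibility condition on an ordered monomial:
indices weakly increase, with strict increase required at an index `i` whenever
`ε(|x_i|,|x_i|) ≠ 1`. -/
def PBWAdmissible {R : Type*} [CommRing R] {G : Type*} [CommGroup G]
    {I : Type*} [LinearOrder I] (ε : G → G → R) (deg : I → G) (l : List I) : Prop :=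
  l.Chain' fun i j => i < j ∨ (i = j ∧ ε (deg i) (deg i) = 1)

set_option maxHeartbeats 1000000
set_option synthInstance.maxHeartbeats 1000000

/-! ### Auxiliary lemmas -/

section CoeffPS

variable {K : Type*} [CommRing K] {M : Type*} [AddCommGroup M] [Module K M]

theorem coeffPS_tmul (n : ℕ) (f : PowerSeries K) (m : M) :
    coeffPS K M n (f ⊗ₜ[K] m) = PowerSeries.coeff n f • m := by
  simp [coeffPS]

theorem coeffPS_smul (n : ℕ) (f : PowerSeries K) (z : PowerSeries K ⊗[K] M) :
    coeffPS K M n (f • z) =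
      ∑ s ∈ Finset.range (n + 1), PowerSeries.coeff s f • coeffPS K M (n - s) z := by
  induction z using TensorProduct.induction_on with
  | zero => simp
  | tmul g m =>
      rw [TensorProduct.smul_tmul', smul_eq_mul, coeffPS_tmul, PowerSeries.coeff_mul,
        Finset.Nat.sum_antidiagonal_eq_sum_range_succ_mk]
      simp [coeffPS_tmul, Finset.sum_smul, mul_smul]
  | add x y hx hy =>
      simp only [smul_add, map_add, hx, hy, ← Finset.sum_add_distrib, smul_add]

theorem coeffPS_C_smul (n : ℕ) (c : K) (z : PowerSeries K ⊗[K] M) :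
    coeffPS K M n (PowerSeries.C c • z) = c • coeffPS K M n z := by
  rw [PowerSeries.C_eq_algebraMap, algebraMap_smul, map_smul]

theorem coeffPS_one_tmul (n : ℕ) (m : M) :
    coeffPS K M n ((1 : PowerSeries K) ⊗ₜ[K] m) = if n = 0 then m else 0 := by
  rw [coeffPS_tmul, PowerSeries.coeff_one]
  split <;> simp

theorem coeffPS_smul_zero' (f : PowerSeries K) (z : PowerSeries K ⊗[K] M) :
    coeffPS K M 0 (f • z) = PowerSeries.constantCoeff f • coeffPS K M 0 z := by
  rw [coeffPS_smul]; simp [PowerSeries.coeff_zero_eq_constantCoeff]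

theorem coeffPS_smul_one' (f : PowerSeries K) (z : PowerSeries K ⊗[K] M) :
    coeffPS K M 1 (f • z) = PowerSeries.constantCoeff f • coeffPS K M 1 z
      + PowerSeries.coeff 1 f • coeffPS K M 0 z := by
  rw [coeffPS_smul, Finset.sum_range_succ, Finset.sum_range_one]
  simp [PowerSeries.coeff_zero_eq_constantCoeff, add_comm]

end CoeffPS

section ListInv

/-- Number of inversions of a list. -/
def listInv {I : Type*} [LinearOrder I] : List I → ℕ
  | [] => 0
  | a :: t => t.countP (fun x => decide (x < a)) + listInv t

theorem listInv_le {I : Type*} [LinearOrder I] (l : List I) : listInv l ≤ l.length ^ 2 := by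
  induction l with
  | nil => simp [listInv]
  | cons a t ih =>
      have h1 : t.countP (fun x => decide (x < a)) ≤ t.length := List.countP_le_length
      have h2 : listInv (a :: t) = t.countP (fun x => decide (x < a)) + listInv t := rfl
      rw [h2]
      simp only [List.length_cons]
      nlinarith [ih]

theorem listInv_append {I : Type*} [LinearOrder I] (A l : List I) :
    listInv (A ++ l) = listInv A + (A.map fun a => l.countP (fun x => decide (x < a))).sum
      + listInv l := by
  induction A with
  | nil => simp [listInv]
  | cons a t ih =>
      show (t ++ l).countP _ + listInv (t ++ l) = _
      rw [List.countP_append, ih, List.map_cons, List.sum_cons]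
      show _ = _ + listInv t + _ + _
      omega

theorem listInv_swap {I : Type*} [LinearOrder I] (A B : List I) {i j : I} (hji : j < i) :
    listInv (A ++ i :: j :: B) = listInv (A ++ j :: i :: B) + 1 := by
  rw [listInv_append, listInv_append]
  have hc : ∀ a : I, (i :: j :: B).countP (fun x => decide (x < a)) =
      (j :: i :: B).countP (fun x => decide (x < a)) := by
    intro a; simp [List.countP_cons]; ring
  have h1 : listInv (i :: j :: B) = listInv (j :: i :: B) + 1 := by
    show (j :: B).countP _ + ((B.countP _) + listInv B) =
      ((i :: B).countP _ + ((B.countP _) + listInv B)) + 1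
    rw [List.countP_cons, List.countP_cons]
    simp [hji, not_lt_of_gt hji, lt_asymm hji]
    omega
  simp only [List.map_congr_left fun a _ => hc a]
  omega

/-- Decomposition of a list failing `Chain'`. -/
theorem not_chain'_decomp {I : Type*} {R : I → I → Prop} :
    ∀ (l : List I), ¬ l.Chain' R → ∃ A a c B, l = A ++ a :: c :: B ∧ ¬ R a c
  | [], h => absurd List.isChain_nil h
  | [a], h => absurd (List.isChain_singleton a) h
  | a :: c :: t, h => by
      change ¬ List.IsChain R (a :: c :: t) at h
      rw [List.isChain_cons_cons] at h
      by_cases hac : R a c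
      · have ht : ¬ (c :: t).Chain' R := fun hh => h ⟨hac, hh⟩
        obtain ⟨A, x, y, B, hEq, hxy⟩ := not_chain'_decomp (c :: t) ht
        exact ⟨a :: A, x, y, B, by rw [List.cons_append, ← hEq], hxy⟩
      · exact ⟨[], a, c, t, rfl, hac⟩

end ListInv

section ColorLieAux

variable {R : Type*} [CommRing R] {G : Type*} [CommGroup G] [DecidableEq G]
  {ε : G → G → R} {L : Type*} [AddCommGroup L] [Module R L]

theorem ColorLie.ιU_mul_ιU (cl : ColorLie R G ε L) {g h : G} {a c : L}
    (ha : a ∈ cl.grading g) (hc : c ∈ cl.grading h) :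
    cl.ιU a * cl.ιU c = ε g h • (cl.ιU c * cl.ιU a) + cl.ιU (cl.bracket a c) := by
  have hrel := RingQuot.mkAlgHom_rel R (ColorLie.Rel.mk ha hc)
  simp only [map_sub, map_mul, map_smul] at hrel
  simp only [ColorLie.ιU, LinearMap.comp_apply, AlgHom.toLinearMap_apply]
  rw [← hrel]; abel

/-- A monomial in the universal enveloping algebra. -/
noncomputable def UMon {I : Type*} (cl : ColorLie R G ε L) (v : I → L) (l : List I) : cl.U :=
  (l.map fun i => cl.ιU (v i)).prod

theorem UMon_nil {I : Type*} (cl : ColorLie R G ε L) (v : I → L) :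
    UMon cl v ([] : List I) = 1 := rfl

theorem UMon_cons {I : Type*} (cl : ColorLie R G ε L) (v : I → L) (i : I) (l : List I) :
    UMon cl v (i :: l) = cl.ιU (v i) * UMon cl v l := by simp [UMon]

theorem UMon_append {I : Type*} (cl : ColorLie R G ε L) (v : I → L) (l l' : List I) :
    UMon cl v (l ++ l') = UMon cl v l * UMon cl v l' := by simp [UMon]

theorem UMon_mem_Udeg {I : Type*} (cl : ColorLie R G ε L) (v : I → L) (dg : I → G)
    (hv : ∀ i, v i ∈ cl.grading (dg i)) (l : List I) :
    UMon cl v l ∈ cl.Udeg ((l.map dg).prod) := by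
  refine Submodule.subset_span ⟨l.map fun i => (dg i, v i), ?_, ?_, ?_⟩
  · intro p hp
    simp only [List.mem_map] at hp
    obtain ⟨i, _, rfl⟩ := hp
    exact hv i
  · simp [List.map_map, Function.comp_def]
  · simp [UMon, List.map_map, Function.comp_def]

/-- Homogeneous elements lie in the span of the basis vectors of the same degree. -/
theorem mem_grading_span {I : Type*} [Fintype I] (cl : ColorLie R G ε L)
    (b : Module.Basis I R L) (deg : I → G) (hb : ∀ i, b i ∈ cl.grading (deg i))
    {g : G} {v : L} (hv : v ∈ cl.grading g) :
    v ∈ Submodule.span R {u | ∃ i, deg i = g ∧ u = b i} := by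
  letI := cl.internal.chooseDecomposition
  have hv2 : v = ((DirectSum.decompose cl.grading v) g : L) := by
    rw [DirectSum.decompose_of_mem _ hv, DirectSum.of_eq_same]
  have hsum : v = ∑ i, b.repr v i • b i := (b.sum_repr v).symm
  have hdec : (DirectSum.decompose cl.grading v) =
      ∑ i, b.repr v i • DirectSum.decompose cl.grading (b i) := by
    conv_lhs => rw [hsum]
    rw [DirectSum.decompose_sum]
    simp only [DirectSum.decompose_smul]
  rw [hv2, hdec]
  have heval : ((∑ i, b.repr v i • DirectSum.decompose cl.grading (b i)) g : L)
      = ∑ i, (((b.repr v i • DirectSum.decompose cl.grading (b i)) g : cl.grading g) : L) := by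
    rw [DFinsupp.finset_sum_apply, AddSubmonoidClass.coe_finset_sum]
  rw [heval]
  refine Submodule.sum_mem _ fun i _ => ?_
  rw [DirectSum.smul_apply, DirectSum.decompose_of_mem _ (hb i)]
  by_cases hdg : deg i = g
  · subst hdg
    rw [DirectSum.of_eq_same]
    exact Submodule.smul_mem _ _ (Submodule.subset_span ⟨i, rfl, rfl⟩)
  · rw [DirectSum.of_eq_of_ne _ _ _ (Ne.symm hdg)]
    simp

end ColorLieAux

section Straighten

variable {K : Type*} [Field K] {G : Type*} [CommGroup G] [DecidableEq G]
  {ε : G → G → K} {L : Type*} [AddCommGroup L] [Module K L]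
  {I : Type*} [Fintype I] [LinearOrder I]

/-- Span of admissible basis monomials of a given degree. -/
noncomputable def admSpan (cl : ColorLie K G ε L) (b : Module.Basis I K L) (deg : I → G) (g : G) :
    Submodule K cl.U :=
  Submodule.span K {u : cl.U | ∃ c : List I, PBWAdmissible ε deg c ∧
    (c.map deg).prod = g ∧ u = UMon cl b c}

variable (cl : ColorLie K G ε L) (b : Module.Basis I K L) (deg : I → G)
  (hb : ∀ i, b i ∈ cl.grading (deg i))

theorem cube_arith (n : ℕ) : (n + 1) ^ 3 + (n + 1) ^ 2 < (n + 2) ^ 3 := by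
  have e1 : (n + 1) ^ 3 = n ^ 3 + 3 * n ^ 2 + 3 * n + 1 := by ring
  have e2 : (n + 1) ^ 2 = n ^ 2 + 2 * n + 1 := by ring
  have e3 : (n + 2) ^ 3 = n ^ 3 + 6 * n ^ 2 + 12 * n + 8 := by ring
  omega

include hb in
theorem straighten : ∀ l : List I, UMon cl b l ∈ admSpan cl b deg ((l.map deg).prod) := by
  suffices H : ∀ N (l : List I), l.length ^ 3 + listInv l < N →
      UMon cl b l ∈ admSpan cl b deg ((l.map deg).prod) from
    fun l => H _ l (Nat.lt_succ_self _)
  intro N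
  induction N with
  | zero => exact fun l h => absurd h (Nat.not_lt_zero _)
  | succ N ih =>
    intro l hl
    by_cases hadm : PBWAdmissible ε deg l
    · exact Submodule.subset_span ⟨l, hadm, rfl, rfl⟩
    obtain ⟨A, i, j, B, rfl, hbad⟩ := not_chain'_decomp _ hadm
    simp only [List.length_append, List.length_cons] at hl
    -- rank of insertion lists
    have hrank : ∀ k : I, (A ++ k :: B).length ^ 3 + listInv (A ++ k :: B) < N := by
      intro k
      have h1 := listInv_le (A ++ k :: B)
      simp only [List.length_append, List.length_cons] at h1 ⊢
      have hL1 : A.length + (B.length + 1) = A.length + B.length + 1 := by omega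
      have hL2 : A.length + (B.length + 1 + 1) = A.length + B.length + 2 := by omega
      rw [hL1] at h1 ⊢
      rw [hL2] at hl
      have h2 := cube_arith (A.length + B.length)
      omega
    -- inserting a homogeneous vector between `UMon A` and `UMon B`
    have hins : ∀ {g' : G} {w : L}, w ∈ cl.grading g' →
        UMon cl b A * cl.ιU w * UMon cl b B ∈
          admSpan cl b deg ((A.map deg).prod * g' * (B.map deg).prod) := by
      intro g' w hw
      refine Submodule.span_induction ?_ ?_ ?_ ?_ (mem_grading_span cl b deg hb hw)
      · rintro u ⟨k, hk, rfl⟩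
        subst hk
        have hIH := ih (A ++ k :: B) (hrank k)
        have heq : UMon cl b A * cl.ιU (b k) * UMon cl b B = UMon cl b (A ++ k :: B) := by
          simp [UMon_append, UMon_cons, mul_assoc]
        have hdeg : (((A ++ k :: B).map deg).prod : G) =
            (A.map deg).prod * deg k * (B.map deg).prod := by
          simp [List.map_append, List.prod_append, mul_assoc]
        rw [heq, ← hdeg]
        exact hIH
      · simp
      · intro u v _ _ hu hv
        rw [map_add, mul_add, add_mul]
        exact add_mem hu hv
      · intro c u _ hu
        rw [map_smul, mul_smul_comm, smul_mul_assoc]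
        exact Submodule.smul_mem _ _ hu
    have hexp : UMon cl b (A ++ i :: j :: B) =
        UMon cl b A * (cl.ιU (b i) * cl.ιU (b j)) * UMon cl b B := by
      simp [UMon_append, UMon_cons, mul_assoc]
    have hdpl : (((A ++ i :: j :: B).map deg).prod : G) =
        (A.map deg).prod * (deg i * deg j) * (B.map deg).prod := by
      simp [List.map_append, List.prod_append, mul_assoc]
    push_neg at hbad
    obtain ⟨h1, h2⟩ := hbad
    rcases lt_or_eq_of_le h1 with hji | hji
    · -- swap case
      have hswap : (A ++ j :: i :: B).length ^ 3 + listInv (A ++ j :: i :: B) < N := by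
        have h3 := listInv_swap A B hji
        simp only [List.length_append, List.length_cons] at *
        omega
      have hIH := ih (A ++ j :: i :: B) hswap
      have hrel := ColorLie.ιU_mul_ιU cl (hb i) (hb j)
      have hcomp : UMon cl b (A ++ i :: j :: B) =
          ε (deg i) (deg j) • UMon cl b (A ++ j :: i :: B)
            + UMon cl b A * cl.ιU (cl.bracket (b i) (b j)) * UMon cl b B := by
        rw [hexp, hrel]
        have hswapexp : UMon cl b (A ++ j :: i :: B) =
            UMon cl b A * (cl.ιU (b j) * cl.ιU (b i)) * UMon cl b B := by
          simp [UMon_append, UMon_cons, mul_assoc]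
        rw [hswapexp, mul_add, add_mul, mul_smul_comm, smul_mul_assoc]
      have hdps : (((A ++ j :: i :: B).map deg).prod : G) =
          (A.map deg).prod * (deg i * deg j) * (B.map deg).prod := by
        simp [List.map_append, List.prod_append, mul_assoc]
        exact mul_left_comm _ _ _
      rw [hcomp, hdpl]
      refine add_mem (Submodule.smul_mem _ _ ?_) (hins (cl.bracket_grade (hb i) (hb j)))
      rw [← hdps]; exact hIH
    · -- square case
      subst hji
      have hη : ε (deg j) (deg j) ≠ 1 := h2 rfl
      have hrel := ColorLie.ιU_mul_ιU cl (hb j) (hb j)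
      have h3 : cl.ιU (b j) * cl.ιU (b j) - ε (deg j) (deg j) • (cl.ιU (b j) * cl.ιU (b j))
          = cl.ιU (cl.bracket (b j) (b j)) := sub_eq_iff_eq_add'.mpr hrel
      have h5 : (1 - ε (deg j) (deg j)) • (cl.ιU (b j) * cl.ιU (b j))
          = cl.ιU (cl.bracket (b j) (b j)) := by
        calc (1 - ε (deg j) (deg j)) • (cl.ιU (b j) * cl.ιU (b j))
            = (1 : K) • (cl.ιU (b j) * cl.ιU (b j))
              - ε (deg j) (deg j) • (cl.ιU (b j) * cl.ιU (b j)) := by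
                exact sub_smul 1 (ε (deg j) (deg j)) (cl.ιU (b j) * cl.ιU (b j))
          _ = cl.ιU (cl.bracket (b j) (b j)) := by rw [one_smul]; exact h3
      have h4 : cl.ιU (b j) * cl.ιU (b j)
          = (1 - ε (deg j) (deg j))⁻¹ • cl.ιU (cl.bracket (b j) (b j)) := by
        rw [← h5, smul_smul, inv_mul_cancel₀ (sub_ne_zero.mpr (Ne.symm hη)), one_smul]
      have hcomp : UMon cl b (A ++ j :: j :: B) = (1 - ε (deg j) (deg j))⁻¹ •
          (UMon cl b A * cl.ιU (cl.bracket (b j) (b j)) * UMon cl b B) := by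
        rw [hexp, h4, mul_smul_comm, smul_mul_assoc]
      rw [hcomp, hdpl]
      exact Submodule.smul_mem _ _ (hins (cl.bracket_grade (hb j) (hb j)))

end Straighten

section SpanConsequences

variable {K : Type*} [Field K] {G : Type*} [CommGroup G] [DecidableEq G]
  {ε : G → G → K} {L : Type*} [AddCommGroup L] [Module K L]
  {I : Type*} [Fintype I] [LinearOrder I]
  (cl : ColorLie K G ε L) (b : Module.Basis I K L) (deg : I → G)
  (hb : ∀ i, b i ∈ cl.grading (deg i))

include hb in
theorem ιU_mul_admSpan {g' g'' : G} {w : L} (hw : w ∈ cl.grading g') {u : cl.U}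
    (hu : u ∈ admSpan cl b deg g'') :
    cl.ιU w * u ∈ admSpan cl b deg (g' * g'') := by
  refine Submodule.span_induction ?_ ?_ ?_ ?_ hu
  · rintro u' ⟨c, hadm, hdp, rfl⟩
    refine Submodule.span_induction ?_ ?_ ?_ ?_ (mem_grading_span cl b deg hb hw)
    · rintro w' ⟨k, hk, rfl⟩
      have heq : cl.ιU (b k) * UMon cl b c = UMon cl b (k :: c) := (UMon_cons cl b k c).symm
      have hdeg : ((k :: c).map deg).prod = g' * g'' := by
        simp only [List.map_cons, List.prod_cons, hdp, hk]
      rw [heq, ← hdeg]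
      exact straighten cl b deg hb (k :: c)
    · simp
    · intro a a' _ _ ha ha'
      rw [map_add, add_mul]
      exact add_mem ha ha'
    · intro r a _ ha
      rw [map_smul, smul_mul_assoc]
      exact Submodule.smul_mem _ _ ha
  · simp
  · intro a a' _ _ ha ha'
    rw [mul_add]
    exact add_mem ha ha'
  · intro r a _ ha
    rw [mul_smul_comm]
    exact Submodule.smul_mem _ _ ha

include hb in
theorem Udeg_le_admSpan (g : G) : cl.Udeg g ≤ admSpan cl b deg g := by
  have key : ∀ (l : List (G × L)), (∀ q ∈ l, q.2 ∈ cl.grading q.1) →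
      ((l.map fun q => cl.ιU q.2).prod) ∈ admSpan cl b deg ((l.map Prod.fst).prod) := by
    intro l
    induction l with
    | nil =>
        intro _
        refine Submodule.subset_span ⟨[], List.isChain_nil, by simp, by simp [UMon]⟩
    | cons q t iht =>
        intro hmem
        simp only [List.map_cons, List.prod_cons]
        exact ιU_mul_admSpan cl b deg hb (hmem q (List.mem_cons_self))
          (iht fun p hp => hmem p (List.mem_cons_of_mem _ hp))
  refine Submodule.span_le.mpr ?_
  rintro u ⟨l, hl, hdp, rfl⟩
  exact hdp ▸ key l hl

include hb in
theorem mem_fullSpan (u : cl.U) :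
    u ∈ Submodule.span K {u : cl.U | ∃ c : List I, PBWAdmissible ε deg c ∧ u = UMon cl b c} := by
  have hM : ∀ u : cl.U, u ∈ Submodule.span K {u : cl.U | ∃ c : List I, u = UMon cl b c} := by
    intro u
    obtain ⟨T, rfl⟩ := RingQuot.mkAlgHom_surjective K cl.Rel u
    induction T using TensorAlgebra.induction with
    | algebraMap r =>
        rw [AlgHom.commutes, Algebra.algebraMap_eq_smul_one]
        exact Submodule.smul_mem _ _ (Submodule.subset_span ⟨[], by simp [UMon]⟩)
    | ι v =>
        have h0 : (RingQuot.mkAlgHom K cl.Rel) (TensorAlgebra.ι K v) = cl.ιU v := rfl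
        rw [h0, ← b.sum_repr v, map_sum]
        refine Submodule.sum_mem _ fun i _ => ?_
        rw [map_smul]
        exact Submodule.smul_mem _ _
          (Submodule.subset_span ⟨[i], by simp [UMon]⟩)
    | mul a₁ a₂ h₁ h₂ =>
        rw [map_mul]
        refine Submodule.span_induction₂
          (p := fun x y _ _ => x * y ∈ Submodule.span K {u : cl.U | ∃ c : List I, u = UMon cl b c})
          ?_ ?_ ?_ ?_ ?_ ?_ ?_ h₁ h₂
        · rintro u₁ u₂ ⟨c₁, rfl⟩ ⟨c₂, rfl⟩
          exact Submodule.subset_span ⟨c₁ ++ c₂, (UMon_append cl b c₁ c₂).symm⟩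
        · intro y _; rw [zero_mul]; exact zero_mem _
        · intro x _; rw [mul_zero]; exact zero_mem _
        · intro x y z _ _ _ hxz hyz; rw [add_mul]; exact add_mem hxz hyz
        · intro x y z _ _ _ hxy hxz; rw [mul_add]; exact add_mem hxy hxz
        · intro r x y _ _ hxy; rw [smul_mul_assoc]; exact Submodule.smul_mem _ _ hxy
        · intro r x y _ _ hxy; rw [mul_smul_comm]; exact Submodule.smul_mem _ _ hxy
    | add a₁ a₂ h₁ h₂ =>
        rw [map_add]
        exact add_mem h₁ h₂
  refine Submodule.span_le.mpr ?_ (hM u)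
  rintro u' ⟨c, rfl⟩
  refine Submodule.span_le.mpr ?_ (straighten cl b deg hb c)
  rintro u'' ⟨c', hadm, _, rfl⟩
  exact Submodule.subset_span ⟨c', hadm, rfl⟩

end SpanConsequences

section PSStraighten

variable {K : Type*} [Field K] {G : Type*} [CommGroup G] [DecidableEq G]
  {ε : G → G → K} {L : Type*} [AddCommGroup L] [Module K L]
  {I : Type*} [Fintype I] [LinearOrder I]

theorem smul_one_tmul {M : Type*} [AddCommGroup M] [Module K M] (f : PowerSeries K)
    (m : M) : f • ((1 : PowerSeries K) ⊗ₜ[K] m) = f ⊗ₜ[K] m := by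
  rw [TensorProduct.smul_tmul', smul_eq_mul, mul_one]

theorem ksmul_eq_Csmul {M : Type*} [AddCommGroup M] [Module K M] (c : K)
    (z : PowerSeries K ⊗[K] M) : c • z = PowerSeries.C c • z := by
  rw [PowerSeries.C_eq_algebraMap, algebraMap_smul]

/-- The submodule of power-series tensors all of whose coefficients are homogeneous
of `G`-degree `g`. -/
noncomputable def Wdeg (cl : ColorLie K G ε L) (g : G) :
    Submodule (PowerSeries K) (PowerSeries K ⊗[K] cl.U) where
  carrier := {z | ∀ n, coeffPS K cl.U n z ∈ cl.Udeg g}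
  add_mem' := by
    intro a c ha hc n
    rw [map_add]
    exact add_mem (ha n) (hc n)
  zero_mem' := by
    intro n
    rw [map_zero]
    exact zero_mem _
  smul_mem' := by
    intro f z hz n
    rw [coeffPS_smul]
    exact Submodule.sum_mem _ fun s _ => Submodule.smul_mem _ _ (hz _)

theorem mem_Wdeg {cl : ColorLie K G ε L} {g : G} {z : PowerSeries K ⊗[K] cl.U} :
    z ∈ Wdeg cl g ↔ ∀ n, coeffPS K cl.U n z ∈ cl.Udeg g := Iff.rfl

variable (cl : ColorLie K G ε L) (b : Module.Basis I K L) (deg : I → G)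
  (hb : ∀ i, b i ∈ cl.grading (deg i))
  (clt : ColorLie (PowerSeries K) G (fun g h => PowerSeries.C (ε g h))
      (PowerSeries K ⊗[K] L))
  (hgrt : ∀ g : G, clt.grading g = (cl.grading g).baseChange (PowerSeries K))
  (hbr0 : ∀ a c : L, coeffPS K L 0 (clt.bracket ((1 : PowerSeries K) ⊗ₜ[K] a)
      ((1 : PowerSeries K) ⊗ₜ[K] c)) = cl.bracket a c)
  (Φ : (PowerSeries K ⊗[K] cl.U) ≃ₗ[PowerSeries K] clt.U)
  (hΦ : ∀ l : List I, PBWAdmissible ε deg l →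
      Φ ((1 : PowerSeries K) ⊗ₜ[K] (l.map fun i => cl.ιU (b i)).prod) =
        (l.map fun i => clt.ιU ((1 : PowerSeries K) ⊗ₜ[K] b i)).prod)

include hb hgrt hbr0 hΦ in
theorem psStraighten : ∀ l : List I,
    Φ.symm (UMon clt (fun i => (1 : PowerSeries K) ⊗ₜ[K] b i) l)
        ∈ Wdeg cl ((l.map deg).prod) ∧
    coeffPS K cl.U 0 (Φ.symm (UMon clt (fun i => (1 : PowerSeries K) ⊗ₜ[K] b i) l))
        = UMon cl b l := by
  set vt : I → PowerSeries K ⊗[K] L := fun i => (1 : PowerSeries K) ⊗ₜ[K] b i with hvt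
  have h1t : ∀ i, vt i ∈ clt.grading (deg i) := fun i => by
    rw [hvt, hgrt]
    exact Submodule.tmul_mem_baseChange_of_mem 1 (hb i)
  suffices H : ∀ N (l : List I), l.length ^ 3 + listInv l < N →
      Φ.symm (UMon clt vt l) ∈ Wdeg cl ((l.map deg).prod) ∧
      coeffPS K cl.U 0 (Φ.symm (UMon clt vt l)) = UMon cl b l from
    fun l => H _ l (Nat.lt_succ_self _)
  intro N
  induction N with
  | zero => exact fun l h => absurd h (Nat.not_lt_zero _)
  | succ N ih =>
    intro l hl
    by_cases hadm : PBWAdmissible ε deg l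
    · have h3 : Φ.symm (UMon clt vt l) = (1 : PowerSeries K) ⊗ₜ[K] UMon cl b l := by
        rw [LinearEquiv.symm_apply_eq]
        exact (hΦ l hadm).symm
      constructor
      · intro n
        rw [h3, coeffPS_one_tmul]
        split
        · exact UMon_mem_Udeg cl b deg hb l
        · exact zero_mem _
      · rw [h3, coeffPS_one_tmul]
        simp
    obtain ⟨A, i, j, B, rfl, hbad⟩ := not_chain'_decomp _ hadm
    simp only [List.length_append, List.length_cons] at hl
    have hrank : ∀ k : I, (A ++ k :: B).length ^ 3 + listInv (A ++ k :: B) < N := by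
      intro k
      have h1 := listInv_le (A ++ k :: B)
      simp only [List.length_append, List.length_cons] at h1 ⊢
      have hL1 : A.length + (B.length + 1) = A.length + B.length + 1 := by omega
      have hL2 : A.length + (B.length + 1 + 1) = A.length + B.length + 2 := by omega
      rw [hL1] at h1 ⊢
      rw [hL2] at hl
      have h2 := cube_arith (A.length + B.length)
      omega
    -- inserting a homogeneous power-series vector between the monomials
    have hins : ∀ (g' : G) (z : PowerSeries K ⊗[K] L),
        z ∈ (cl.grading g').baseChange (PowerSeries K) →
        Φ.symm (UMon clt vt A * clt.ιU z * UMon clt vt B)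
            ∈ Wdeg cl ((A.map deg).prod * g' * (B.map deg).prod) ∧
        coeffPS K cl.U 0 (Φ.symm (UMon clt vt A * clt.ιU z * UMon clt vt B))
            = UMon cl b A * cl.ιU (coeffPS K L 0 z) * UMon cl b B := by
      intro g' z hz
      rw [Submodule.baseChange_eq_span] at hz
      refine Submodule.span_induction ?_ ?_ ?_ ?_ hz
      · rintro z' ⟨v, hv, rfl⟩
        have hmk : (TensorProduct.mk K (PowerSeries K) L 1) v
            = (1 : PowerSeries K) ⊗ₜ[K] v := rfl
        rw [hmk]
        refine Submodule.span_induction ?_ ?_ ?_ ?_ (mem_grading_span cl b deg hb hv)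
        · rintro w ⟨k, hk, rfl⟩
          subst hk
          obtain ⟨hIH1, hIH2⟩ := ih (A ++ k :: B) (hrank k)
          have heqt : UMon clt vt A * clt.ιU ((1 : PowerSeries K) ⊗ₜ[K] b k)
              * UMon clt vt B = UMon clt vt (A ++ k :: B) := by
            simp [UMon_append, UMon_cons, mul_assoc, hvt]
          have hdeg : (((A ++ k :: B).map deg).prod : G) =
              (A.map deg).prod * deg k * (B.map deg).prod := by
            simp [List.map_append, List.prod_append, mul_assoc]
          have heqU : UMon cl b (A ++ k :: B) =
              UMon cl b A * cl.ιU (b k) * UMon cl b B := by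
            simp [UMon_append, UMon_cons, mul_assoc]
          constructor
          · rw [heqt, ← hdeg]
            exact hIH1
          · rw [heqt, hIH2, heqU, coeffPS_one_tmul]
            simp
        · simp
        · intro v₁ v₂ _ _ hv₁ hv₂
          obtain ⟨ha₁, hc₁⟩ := hv₁
          obtain ⟨ha₂, hc₂⟩ := hv₂
          rw [TensorProduct.tmul_add]
          constructor
          · rw [map_add, mul_add, add_mul, map_add]
            exact add_mem ha₁ ha₂
          · rw [map_add, mul_add, add_mul, map_add, map_add, hc₁, hc₂, map_add, map_add,
              mul_add, add_mul]
        · intro c v₁ _ hv₁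
          obtain ⟨ha₁, hc₁⟩ := hv₁
          rw [TensorProduct.tmul_smul, ksmul_eq_Csmul, map_smul, mul_smul_comm,
            smul_mul_assoc, map_smul]
          constructor
          · exact Submodule.smul_mem _ _ ha₁
          · rw [coeffPS_C_smul, hc₁, coeffPS_C_smul, map_smul, mul_smul_comm,
              smul_mul_assoc]
      · constructor
        · rw [map_zero, mul_zero, zero_mul, map_zero]
          exact zero_mem _
        · rw [map_zero, mul_zero, zero_mul, map_zero, map_zero, map_zero, map_zero]
          rw [mul_zero, zero_mul]
      · intro z₁ z₂ _ _ hz₁ hz₂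
        obtain ⟨ha₁, hc₁⟩ := hz₁
        obtain ⟨ha₂, hc₂⟩ := hz₂
        constructor
        · rw [map_add, mul_add, add_mul, map_add]
          exact add_mem ha₁ ha₂
        · rw [map_add, mul_add, add_mul, map_add, map_add, hc₁, hc₂, map_add, map_add,
            mul_add, add_mul]
      · intro f z₁ _ hz₁
        obtain ⟨ha₁, hc₁⟩ := hz₁
        rw [map_smul, mul_smul_comm, smul_mul_assoc, map_smul]
        constructor
        · exact Submodule.smul_mem _ _ ha₁
        · rw [coeffPS_smul_zero', hc₁, coeffPS_smul_zero', map_smul, mul_smul_comm,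
            smul_mul_assoc]
    -- expansion of the two monomials
    have hexpt : UMon clt vt (A ++ i :: j :: B) =
        UMon clt vt A * (clt.ιU (vt i) * clt.ιU (vt j)) * UMon clt vt B := by
      simp [UMon_append, UMon_cons, mul_assoc]
    have hexp : UMon cl b (A ++ i :: j :: B) =
        UMon cl b A * (cl.ιU (b i) * cl.ιU (b j)) * UMon cl b B := by
      simp [UMon_append, UMon_cons, mul_assoc]
    have hdpl : (((A ++ i :: j :: B).map deg).prod : G) =
        (A.map deg).prod * (deg i * deg j) * (B.map deg).prod := by
      simp [List.map_append, List.prod_append, mul_assoc]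
    push_neg at hbad
    obtain ⟨h1, h2⟩ := hbad
    rcases lt_or_eq_of_le h1 with hji | hji
    · -- swap case
      have hswap : (A ++ j :: i :: B).length ^ 3 + listInv (A ++ j :: i :: B) < N := by
        have h3 := listInv_swap A B hji
        simp only [List.length_append, List.length_cons] at *
        omega
      obtain ⟨hIH1, hIH2⟩ := ih (A ++ j :: i :: B) hswap
      have hrelt := ColorLie.ιU_mul_ιU clt (h1t i) (h1t j)
      have hswapexpt : UMon clt vt (A ++ j :: i :: B) =
          UMon clt vt A * (clt.ιU (vt j) * clt.ιU (vt i)) * UMon clt vt B := by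
        simp [UMon_append, UMon_cons, mul_assoc]
      have hcompt : UMon clt vt (A ++ i :: j :: B) =
          PowerSeries.C (ε (deg i) (deg j)) • UMon clt vt (A ++ j :: i :: B)
            + UMon clt vt A * clt.ιU (clt.bracket (vt i) (vt j)) * UMon clt vt B := by
        rw [hexpt, hrelt, hswapexpt, mul_add, add_mul, mul_smul_comm, smul_mul_assoc]
      have hdps : (((A ++ j :: i :: B).map deg).prod : G) =
          (A.map deg).prod * (deg i * deg j) * (B.map deg).prod := by
        simp [List.map_append, List.prod_append, mul_assoc]
        exact mul_left_comm _ _ _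
      have hbrmem : clt.bracket (vt i) (vt j)
          ∈ (cl.grading (deg i * deg j)).baseChange (PowerSeries K) := by
        rw [← hgrt]
        exact clt.bracket_grade (h1t i) (h1t j)
      obtain ⟨hins1, hins2⟩ := hins (deg i * deg j) _ hbrmem
      -- the classical relation
      have hrel := ColorLie.ιU_mul_ιU cl (hb i) (hb j)
      have hswapexp : UMon cl b (A ++ j :: i :: B) =
          UMon cl b A * (cl.ιU (b j) * cl.ιU (b i)) * UMon cl b B := by
        simp [UMon_append, UMon_cons, mul_assoc]
      have hcomp : UMon cl b (A ++ i :: j :: B) =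
          ε (deg i) (deg j) • UMon cl b (A ++ j :: i :: B)
            + UMon cl b A * cl.ιU (cl.bracket (b i) (b j)) * UMon cl b B := by
        rw [hexp, hrel, hswapexp, mul_add, add_mul, mul_smul_comm, smul_mul_assoc]
      constructor
      · rw [hcompt, map_add, map_smul, hdpl]
        refine add_mem (Submodule.smul_mem _ _ ?_) hins1
        rw [← hdps]
        exact hIH1
      · rw [hcompt, map_add, map_smul, map_add, coeffPS_C_smul, hIH2, hins2, hcomp]
        congr 2
        rw [hvt, hbr0]
    · -- square case
      subst hji
      have hη : ε (deg j) (deg j) ≠ 1 := h2 rfl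
      have hη' : (1 : K) - ε (deg j) (deg j) ≠ 0 := sub_ne_zero.mpr (Ne.symm hη)
      -- the classical square relation
      have hrel := ColorLie.ιU_mul_ιU cl (hb j) (hb j)
      have h3 : cl.ιU (b j) * cl.ιU (b j) - ε (deg j) (deg j) • (cl.ιU (b j) * cl.ιU (b j))
          = cl.ιU (cl.bracket (b j) (b j)) := sub_eq_iff_eq_add'.mpr hrel
      have h5 : (1 - ε (deg j) (deg j)) • (cl.ιU (b j) * cl.ιU (b j))
          = cl.ιU (cl.bracket (b j) (b j)) := by
        calc (1 - ε (deg j) (deg j)) • (cl.ιU (b j) * cl.ιU (b j))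
            = (1 : K) • (cl.ιU (b j) * cl.ιU (b j))
              - ε (deg j) (deg j) • (cl.ιU (b j) * cl.ιU (b j)) := by
              exact sub_smul 1 (ε (deg j) (deg j)) (cl.ιU (b j) * cl.ιU (b j))
          _ = cl.ιU (cl.bracket (b j) (b j)) := by rw [one_smul]; exact h3
      have h4 : cl.ιU (b j) * cl.ιU (b j)
          = (1 - ε (deg j) (deg j))⁻¹ • cl.ιU (cl.bracket (b j) (b j)) := by
        rw [← h5, smul_smul, inv_mul_cancel₀ hη', one_smul]
      -- the power-series square relation, transported through `Φ.symm`
      have hrelt := ColorLie.ιU_mul_ιU clt (h1t j) (h1t j)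
      have hrelmul : UMon clt vt (A ++ j :: j :: B) =
          PowerSeries.C (ε (deg j) (deg j)) • UMon clt vt (A ++ j :: j :: B)
            + UMon clt vt A * clt.ιU (clt.bracket (vt j) (vt j)) * UMon clt vt B := by
        conv_lhs => rw [hexpt, hrelt]
        rw [mul_add, add_mul, mul_smul_comm, smul_mul_assoc, ← hexpt]
      set y : PowerSeries K ⊗[K] cl.U := Φ.symm (UMon clt vt (A ++ j :: j :: B)) with hy
      set q : PowerSeries K ⊗[K] cl.U :=
        Φ.symm (UMon clt vt A * clt.ιU (clt.bracket (vt j) (vt j)) * UMon clt vt B) with hq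
      have hyq : y = PowerSeries.C (ε (deg j) (deg j)) • y + q := by
        rw [hy, hq]
        conv_lhs => rw [hrelmul]
        rw [map_add, map_smul]
      have hcoef : ∀ n, coeffPS K cl.U n y
          = (1 - ε (deg j) (deg j))⁻¹ • coeffPS K cl.U n q := by
        intro n
        have h6 : coeffPS K cl.U n y
            = ε (deg j) (deg j) • coeffPS K cl.U n y + coeffPS K cl.U n q := by
          conv_lhs => rw [hyq]
          rw [map_add, coeffPS_C_smul]
        have h7 : coeffPS K cl.U n y - ε (deg j) (deg j) • coeffPS K cl.U n y
            = coeffPS K cl.U n q := sub_eq_iff_eq_add'.mpr h6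
        have h9 : (1 - ε (deg j) (deg j)) • coeffPS K cl.U n y
            = (1 : K) • coeffPS K cl.U n y - ε (deg j) (deg j) • coeffPS K cl.U n y := by
          exact sub_smul 1 (ε (deg j) (deg j)) (coeffPS K cl.U n y)
        have h8 : (1 - ε (deg j) (deg j)) • coeffPS K cl.U n y = coeffPS K cl.U n q := by
          rw [h9, one_smul]
          exact h7
        rw [← h8, smul_smul, inv_mul_cancel₀ hη', one_smul]
      have hcomp : UMon cl b (A ++ j :: j :: B) = (1 - ε (deg j) (deg j))⁻¹ •
          (UMon cl b A * cl.ιU (cl.bracket (b j) (b j)) * UMon cl b B) := by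
        rw [hexp, h4, mul_smul_comm, smul_mul_assoc]
      have hbrmem : clt.bracket (vt j) (vt j)
          ∈ (cl.grading (deg j * deg j)).baseChange (PowerSeries K) := by
        rw [← hgrt]
        exact clt.bracket_grade (h1t j) (h1t j)
      obtain ⟨hins1, hins2⟩ := hins (deg j * deg j) _ hbrmem
      constructor
      · rw [hdpl]
        exact mem_Wdeg.mpr fun n => by
          rw [hcoef n]
          exact Submodule.smul_mem _ _ (mem_Wdeg.mp hins1 n)
      · rw [hcoef 0, hins2, hcomp]
        congr 2
        rw [hvt, hbr0]

include hΦ in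
theorem phi_one_iotaU (v : L) : Φ ((1 : PowerSeries K) ⊗ₜ[K] cl.ιU v)
    = clt.ιU ((1 : PowerSeries K) ⊗ₜ[K] v) := by
  have hsing : ∀ i : I, Φ ((1 : PowerSeries K) ⊗ₜ[K] cl.ιU (b i))
      = clt.ιU ((1 : PowerSeries K) ⊗ₜ[K] b i) := by
    intro i
    have := hΦ [i] (List.isChain_singleton i)
    simpa using this
  have h1 : (1 : PowerSeries K) ⊗ₜ[K] cl.ιU v =
      ∑ i, PowerSeries.C (b.repr v i) • ((1 : PowerSeries K) ⊗ₜ[K] cl.ιU (b i)) := by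
    conv_lhs => rw [← b.sum_repr v]
    rw [map_sum, TensorProduct.tmul_sum]
    refine Finset.sum_congr rfl fun i _ => ?_
    rw [map_smul, TensorProduct.tmul_smul, ksmul_eq_Csmul]
  have h2 : clt.ιU ((1 : PowerSeries K) ⊗ₜ[K] v) =
      ∑ i, PowerSeries.C (b.repr v i) • clt.ιU ((1 : PowerSeries K) ⊗ₜ[K] b i) := by
    conv_lhs => rw [← b.sum_repr v]
    rw [TensorProduct.tmul_sum, map_sum]
    refine Finset.sum_congr rfl fun i _ => ?_
    rw [TensorProduct.tmul_smul, ksmul_eq_Csmul, map_smul]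
  rw [h1, map_sum, h2]
  refine Finset.sum_congr rfl fun i _ => ?_
  rw [map_smul, hsing i]

include hΦ in
theorem coeffPS_symm_iotaU (n : ℕ) (z : PowerSeries K ⊗[K] L) :
    coeffPS K cl.U n (Φ.symm (clt.ιU z)) = cl.ιU (coeffPS K L n z) := by
  induction z using TensorProduct.induction_on with
  | zero => simp
  | tmul f w =>
      have hsymm : Φ.symm (clt.ιU ((1 : PowerSeries K) ⊗ₜ[K] w))
          = (1 : PowerSeries K) ⊗ₜ[K] cl.ιU w := by
        rw [LinearEquiv.symm_apply_eq, phi_one_iotaU cl b deg clt Φ hΦ]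
      rw [← smul_one_tmul f w, map_smul, map_smul, hsymm, smul_one_tmul f (cl.ιU w),
        coeffPS_tmul, smul_one_tmul f w, coeffPS_tmul, map_smul]
  | add z₁ z₂ h₁ h₂ =>
      simp only [map_add, h₁, h₂]

include hb hgrt hΦ in
theorem restrict_rel {g h : G} {X Y : L} (hX : X ∈ cl.grading g) (hY : Y ∈ cl.grading h) :
    coeffPS K cl.U 1 (Φ.symm (Φ ((1 : PowerSeries K) ⊗ₜ[K] cl.ιU X)
        * Φ ((1 : PowerSeries K) ⊗ₜ[K] cl.ιU Y)))
      = ε g h • coeffPS K cl.U 1 (Φ.symm (Φ ((1 : PowerSeries K) ⊗ₜ[K] cl.ιU Y)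
          * Φ ((1 : PowerSeries K) ⊗ₜ[K] cl.ιU X)))
        + cl.ιU (coeffPS K L 1
            (clt.bracket ((1 : PowerSeries K) ⊗ₜ[K] X) ((1 : PowerSeries K) ⊗ₜ[K] Y))) := by
  have hXt : (1 : PowerSeries K) ⊗ₜ[K] X ∈ clt.grading g := by
    rw [hgrt]
    exact Submodule.tmul_mem_baseChange_of_mem 1 hX
  have hYt : (1 : PowerSeries K) ⊗ₜ[K] Y ∈ clt.grading h := by
    rw [hgrt]
    exact Submodule.tmul_mem_baseChange_of_mem 1 hY
  have hrelt := ColorLie.ιU_mul_ιU clt hXt hYt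
  rw [phi_one_iotaU cl b deg clt Φ hΦ, phi_one_iotaU cl b deg clt Φ hΦ, hrelt, map_add,
    map_add, map_smul, coeffPS_C_smul, coeffPS_symm_iotaU cl b deg clt Φ hΦ]

end PSStraighten
set_option synthInstance.maxHeartbeats 1000000 in
/-- Let `(g[[t]], μ_t)` be a graded deformation of a
finite-dimensional color Lie algebra `g` and `π_t = Σ tⁿ π_n` the induced graded
associative deformation of `U(g)` obtained via the PBW isomorphism `Φ` with
`U(g[[t]])`.  Then `π₁` is a graded Hochschild 2-cocycle of `U(g)` with
coefficients in `U(g)`, and its restriction to `g` satisfies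
`μ₁(X,Y) = π₁(X,Y) - ε(|X|,|Y|) π₁(Y,X)` for homogeneous `X, Y ∈ g`. -/
theorem pi_one_is_gradedHochschildCocycle
    {K : Type*} [Field K] [CharZero K] {G : Type*} [CommGroup G] [DecidableEq G]
    {L : Type*} [AddCommGroup L] [Module K L] [FiniteDimensional K L]
    {I : Type*} [Fintype I] [LinearOrder I]
    {ε : G → G → K} (hε : IsBicharacter ε) (cl : ColorLie K G ε L)
    (D : cl.Deformation)
    (b : Module.Basis I K L) (deg : I → G) (hb : ∀ i, b i ∈ cl.grading (deg i))
    (clt : ColorLie (PowerSeries K) G (fun g h => PowerSeries.C (ε g h))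
      (PowerSeries K ⊗[K] L))
    (hgrt : ∀ g : G, clt.grading g = (cl.grading g).baseChange (PowerSeries K))
    (hbrt : ∀ (n : ℕ) (a a' : L),
      coeffPS K L n (clt.bracket ((1 : PowerSeries K) ⊗ₜ[K] a)
        ((1 : PowerSeries K) ⊗ₜ[K] a')) = D.μ n a a')
    -- the PBW isomorphism `Φ`
    (Φ : (PowerSeries K ⊗[K] cl.U) ≃ₗ[PowerSeries K] clt.U)
    (hΦ : ∀ l : List I, PBWAdmissible ε deg l →
      Φ ((1 : PowerSeries K) ⊗ₜ[K] (l.map fun i => cl.ιU (b i)).prod) =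
        (l.map fun i => clt.ιU ((1 : PowerSeries K) ⊗ₜ[K] b i)).prod)
    -- the coefficients of the induced deformation `π_t(a,b) = Φ⁻¹(Φ(a) • Φ(b))`
    (p : ℕ → cl.U →ₗ[K] cl.U →ₗ[K] cl.U)
    (hp : ∀ (n : ℕ) (a a' : cl.U),
      p n a a' = coeffPS K cl.U n
        (Φ.symm (Φ ((1 : PowerSeries K) ⊗ₜ[K] a) *
          Φ ((1 : PowerSeries K) ⊗ₜ[K] a')))) :
    -- `π₁` is homogeneous of degree `e`
    (∀ {g h : G} {a a' : cl.U}, a ∈ cl.Udeg g → a' ∈ cl.Udeg h →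
      p 1 a a' ∈ cl.Udeg (g * h)) ∧
    -- `π₁` is a Hochschild 2-cocycle of `U(g)`
    (∀ a a' a'' : cl.U,
      a * p 1 a' a'' - p 1 (a * a') a'' + p 1 a (a' * a'') - p 1 a a' * a'' = 0) ∧
    -- the restriction of `π₁` to `g` recovers `μ₁`
    (∀ {g h : G} {X Y : L}, X ∈ cl.grading g → Y ∈ cl.grading h →
      cl.ιU (D.μ 1 X Y) =
        p 1 (cl.ιU X) (cl.ιU Y) - ε g h • p 1 (cl.ιU Y) (cl.ιU X)) := by

  classical
  -- notation
  set vt : I → PowerSeries K ⊗[K] L := fun i => (1 : PowerSeries K) ⊗ₜ[K] b i with hvt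
  have hbr0 : ∀ a c : L, coeffPS K L 0 (clt.bracket ((1 : PowerSeries K) ⊗ₜ[K] a)
      ((1 : PowerSeries K) ⊗ₜ[K] c)) = cl.bracket a c := by
    intro a c
    rw [hbrt 0, D.init]
  have hPS := psStraighten cl b deg hb clt hgrt hbr0 Φ hΦ
  have hΦ' : ∀ c : List I, PBWAdmissible ε deg c →
      Φ ((1 : PowerSeries K) ⊗ₜ[K] UMon cl b c) = UMon clt vt c := fun c hc => hΦ c hc
  -- `p 0` is the multiplication
  have hp0 : ∀ a a' : cl.U, p 0 a a' = a * a' := by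
    have hgen : ∀ c c' : List I, PBWAdmissible ε deg c → PBWAdmissible ε deg c' →
        p 0 (UMon cl b c) (UMon cl b c') = UMon cl b c * UMon cl b c' := by
      intro c c' hc hc'
      rw [hp 0, hΦ' c hc, hΦ' c' hc', ← UMon_append, (hPS (c ++ c')).2, UMon_append]
    intro a a'
    refine Submodule.span_induction₂ (p := fun x y _ _ => p 0 x y = x * y)
      ?_ ?_ ?_ ?_ ?_ ?_ ?_ (mem_fullSpan cl b deg hb a) (mem_fullSpan cl b deg hb a')
    · rintro x y ⟨c, hc, rfl⟩ ⟨c', hc', rfl⟩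
      exact hgen c c' hc hc'
    · intro y _
      rw [map_zero, LinearMap.zero_apply, zero_mul]
    · intro x _
      rw [map_zero, mul_zero]
    · intro x y z _ _ _ hxz hyz
      rw [map_add, LinearMap.add_apply, hxz, hyz, add_mul]
    · intro x y z _ _ _ hxy hxz
      rw [map_add, hxy, hxz, mul_add]
    · intro r x y _ _ hxy
      rw [map_smul, LinearMap.smul_apply, hxy, smul_mul_assoc]
    · intro r x y _ _ hxy
      rw [map_smul, hxy, mul_smul_comm]
  -- gradedness of `p 1`
  have hgraded : ∀ {g h : G} {a a' : cl.U}, a ∈ cl.Udeg g → a' ∈ cl.Udeg h →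
      p 1 a a' ∈ cl.Udeg (g * h) := by
    intro g h a a' ha ha'
    have hgen : ∀ c c' : List I, PBWAdmissible ε deg c → PBWAdmissible ε deg c' →
        p 1 (UMon cl b c) (UMon cl b c') ∈ cl.Udeg ((c.map deg).prod * (c'.map deg).prod) := by
      intro c c' hc hc'
      rw [hp 1, hΦ' c hc, hΦ' c' hc', ← UMon_append]
      have h1 := mem_Wdeg.mp (hPS (c ++ c')).1 1
      rwa [List.map_append, List.prod_append] at h1
    have ha2 := Udeg_le_admSpan cl b deg hb g ha
    have ha2' := Udeg_le_admSpan cl b deg hb h ha'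
    refine Submodule.span_induction
      (p := fun x _ => ∀ y ∈ admSpan cl b deg h, p 1 x y ∈ cl.Udeg (g * h))
      ?_ ?_ ?_ ?_ ha2 a' ha2'
    · rintro x ⟨c, hc, hdc, rfl⟩ y hy
      refine Submodule.span_induction (p := fun y _ => p 1 (UMon cl b c) y ∈ cl.Udeg (g * h))
        ?_ ?_ ?_ ?_ hy
      · rintro y' ⟨c', hc', hdc', rfl⟩
        have := hgen c c' hc hc'
        rwa [hdc, hdc'] at this
      · show p 1 (UMon cl b c) 0 ∈ cl.Udeg (g * h)
        rw [map_zero]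
        exact zero_mem _
      · intro y₁ y₂ _ _ h₁ h₂
        show p 1 (UMon cl b c) (y₁ + y₂) ∈ cl.Udeg (g * h)
        rw [map_add]
        exact add_mem h₁ h₂
      · intro r y₁ _ h₁
        show p 1 (UMon cl b c) (r • y₁) ∈ cl.Udeg (g * h)
        rw [map_smul]
        exact Submodule.smul_mem _ _ h₁
    · intro y _
      show p 1 0 y ∈ cl.Udeg (g * h)
      rw [map_zero, LinearMap.zero_apply]
      exact zero_mem _
    · intro x₁ x₂ _ _ h₁ h₂ y hy
      show p 1 (x₁ + x₂) y ∈ cl.Udeg (g * h)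
      rw [map_add, LinearMap.add_apply]
      exact add_mem (h₁ y hy) (h₂ y hy)
    · intro r x₁ _ h₁ y hy
      show p 1 (r • x₁) y ∈ cl.Udeg (g * h)
      rw [map_smul, LinearMap.smul_apply]
      exact Submodule.smul_mem _ _ (h₁ y hy)
  -- the two coefficient-expansion lemmas
  have hM1 : ∀ (a : cl.U) (Y : PowerSeries K ⊗[K] cl.U),
      coeffPS K cl.U 1 (Φ.symm (Φ ((1 : PowerSeries K) ⊗ₜ[K] a) * Φ Y))
        = p 1 a (coeffPS K cl.U 0 Y) + p 0 a (coeffPS K cl.U 1 Y) := by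
    intro a Y
    induction Y using TensorProduct.induction_on with
    | zero => simp
    | tmul f u =>
        have hfu : f ⊗ₜ[K] u = f • ((1 : PowerSeries K) ⊗ₜ[K] u) := by
          rw [TensorProduct.smul_tmul', smul_eq_mul, mul_one]
        conv_lhs => rw [hfu]
        rw [map_smul, mul_smul_comm, map_smul, coeffPS_smul_one', ← hp 1 a u, ← hp 0 a u,
          coeffPS_tmul, coeffPS_tmul, map_smul, map_smul,
          PowerSeries.coeff_zero_eq_constantCoeff]
    | add Y₁ Y₂ h₁ h₂ =>
        simp only [map_add, mul_add, h₁, h₂, LinearMap.add_apply]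
        abel
  have hM2 : ∀ (a : cl.U) (Y : PowerSeries K ⊗[K] cl.U),
      coeffPS K cl.U 1 (Φ.symm (Φ Y * Φ ((1 : PowerSeries K) ⊗ₜ[K] a)))
        = p 1 (coeffPS K cl.U 0 Y) a + p 0 (coeffPS K cl.U 1 Y) a := by
    intro a Y
    induction Y using TensorProduct.induction_on with
    | zero => simp
    | tmul f u =>
        have hfu : f ⊗ₜ[K] u = f • ((1 : PowerSeries K) ⊗ₜ[K] u) := by
          rw [TensorProduct.smul_tmul', smul_eq_mul, mul_one]
        conv_lhs => rw [hfu]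
        rw [map_smul, smul_mul_assoc, map_smul, coeffPS_smul_one', ← hp 1 u a, ← hp 0 u a,
          coeffPS_tmul, coeffPS_tmul, map_smul, map_smul, LinearMap.smul_apply,
          LinearMap.smul_apply, PowerSeries.coeff_zero_eq_constantCoeff]
    | add Y₁ Y₂ h₁ h₂ =>
        simp only [map_add, add_mul, h₁, h₂, LinearMap.add_apply]
        abel
  -- the Hochschild cocycle identity
  have hcocycle : ∀ a a' a'' : cl.U,
      a * p 1 a' a'' - p 1 (a * a') a'' + p 1 a (a' * a'') - p 1 a a' * a'' = 0 := by
    intro a a' a''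
    set Y : PowerSeries K ⊗[K] cl.U :=
      Φ.symm (Φ ((1 : PowerSeries K) ⊗ₜ[K] a') * Φ ((1 : PowerSeries K) ⊗ₜ[K] a'')) with hY
    set X : PowerSeries K ⊗[K] cl.U :=
      Φ.symm (Φ ((1 : PowerSeries K) ⊗ₜ[K] a) * Φ ((1 : PowerSeries K) ⊗ₜ[K] a')) with hX
    have hassoc : Φ.symm (Φ ((1 : PowerSeries K) ⊗ₜ[K] a) * Φ Y)
        = Φ.symm (Φ X * Φ ((1 : PowerSeries K) ⊗ₜ[K] a'')) := by
      rw [hY, hX, LinearEquiv.apply_symm_apply, LinearEquiv.apply_symm_apply, mul_assoc]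
    have heq := congrArg (coeffPS K cl.U 1) hassoc
    rw [hM1 a Y, hM2 a'' X] at heq
    have hY0 : coeffPS K cl.U 0 Y = p 0 a' a'' := (hp 0 a' a'').symm
    have hY1 : coeffPS K cl.U 1 Y = p 1 a' a'' := (hp 1 a' a'').symm
    have hX0 : coeffPS K cl.U 0 X = p 0 a a' := (hp 0 a a').symm
    have hX1 : coeffPS K cl.U 1 X = p 1 a a' := (hp 1 a a').symm
    rw [hY0, hY1, hX0, hX1, hp0 a' a'', hp0 a a', hp0 a (p 1 a' a''), hp0 (p 1 a a') a'']
      at heq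
    have h0 : (p 1 a (a' * a'') + a * p 1 a' a'')
        - (p 1 (a * a') a'' + p 1 a a' * a'') = 0 := sub_eq_zero.mpr heq
    rw [← h0]
    abel
  -- restriction to `L` recovers `μ₁`
  have hrestrict : ∀ {g h : G} {X Y : L}, X ∈ cl.grading g → Y ∈ cl.grading h →
      cl.ιU (D.μ 1 X Y) =
        p 1 (cl.ιU X) (cl.ιU Y) - ε g h • p 1 (cl.ιU Y) (cl.ιU X) := by
    intro g h X Y hX hY
    have e3 := restrict_rel cl b deg hb clt hgrt Φ hΦ hX hY
    rw [← hp 1 (cl.ιU X) (cl.ιU Y), ← hp 1 (cl.ιU Y) (cl.ιU X), hbrt] at e3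
    exact (sub_eq_iff_eq_add'.mpr e3).symm
  exact ⟨fun {g h a a'} ha ha' => hgraded ha ha', hcocycle, fun {g h X Y} hX hY => hrestrict hX hY⟩
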